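/- The dendriform multiplication on tree names satisfies cancellation: v̄ ⋉ ū = v̄ ⋉ w̄ implies ū = w̄ (for ū, w̄ of equal degree), and ū ⋉ v̄ = w̄ ⋉ v̄ implies ū = w̄. -/

import Mathlib

/-- Planar rooted binary trees. -/
inductive PB : Type
  | leaf : PB
  | node : PB → PB → PB
  deriving DecidableEq

namespace PB

/-- The name (vector encoding) of a planar binary tree. -/
def name : PB → List ℕ
  | leaf => []
  | node l r => name l ++ [1] ++ (name r).map (fun x => x + (name l).length + 1)

/-- Number of internal (trivalent) vertices. -/
def nodes : PB → ℕ
  | leaf => 0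
  | node l r => nodes l + nodes r + 1

/-- Mirror image of a tree. -/
def mirror : PB → PB
  | leaf => leaf
  | node l r => node (mirror r) (mirror l)

/-- Left subtree. -/
def left : PB → PB
  | leaf => leaf
  | node l _ => l

/-- Right subtree. -/
def right : PB → PB
  | leaf => leaf
  | node _ r => r

end PB

/-- Grafting on vectors: v ∨ w = (v, 1, w + (len v + 1)). -/
def graft (v w : List ℕ) : List ℕ := v ++ [1] ++ w.map (fun x => x + v.length + 1)

/-- A list is a tree name if it is the name of some planar binary tree. -/
def TreeName (v : List ℕ) : Prop := ∃ t : PB, PB.name t = v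

/-- Componentwise order on vectors (of the same length). -/
def vle (v w : List ℕ) : Prop := List.Forall₂ (· ≤ ·) v w

/-- Strict componentwise order. -/
def vlt (v w : List ℕ) : Prop := vle v w ∧ v ≠ w

/-- k ▷ w : shift all coordinates ≠ 1 by k, fix coordinates equal to 1. -/
def rsh (k : ℕ) (w : List ℕ) : List ℕ := w.map (fun x => if x = 1 then 1 else x + k)

/-- The over operation on tree names: v ↗ w = (v, len v ▷ w). -/
def overV (v w : List ℕ) : List ℕ := v ++ rsh v.length w

/-- The under operation on tree names: v ↖ w = (v, len v + w). -/
def under (v w : List ℕ) : List ℕ := v ++ w.map (fun x => x + v.length)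

/-- Componentwise interval of lists. -/
def listIcc : List ℕ → List ℕ → Finset (List ℕ)
  | a :: as, b :: bs => ((Finset.Icc a b) ×ˢ listIcc as bs).image fun p => p.1 :: p.2
  | _, _ => {[]}

open Classical in
/-- Componentwise interval of tree names. -/
noncomputable def treeIcc (a b : List ℕ) : Finset (List ℕ) :=
  (listIcc a b).filter TreeName

/-- Dendriform addition of tree names: all tree names t with v ↗ w ≤ t ≤ v ↖ w. -/
noncomputable def dplus (v w : List ℕ) : Finset (List ℕ) :=
  treeIcc (overV v w) (under v w)

open Classical in
/-- The tree with a given name. -/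
noncomputable def treeOf (v : List ℕ) : PB :=
  if h : ∃ t : PB, PB.name t = v then h.choose else PB.leaf

/-- The dendriform involution on tree names (mirror image of the tree). -/
noncomputable def dag (v : List ℕ) : List ℕ := PB.name (PB.mirror (treeOf v))

/-- The name of the left subtree of (the tree of) a name. -/
noncomputable def leftN (v : List ℕ) : List ℕ := PB.name (treeOf v).left

/-- The name of the right subtree of (the tree of) a name. -/
noncomputable def rightN (v : List ℕ) : List ℕ := PB.name (treeOf v).right

/-- Left dendriform operation v ⊣ w := v_l ∨ (v_r ∔ w). -/
noncomputable def dashv (v w : List ℕ) : Finset (List ℕ) :=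
  (dplus (rightN v) w).image (graft (leftN v))

/-- Right dendriform operation v ⊢ w := (v ∔ w_l) ∨ w_r. -/
noncomputable def vdash (v w : List ℕ) : Finset (List ℕ) :=
  (dplus v (leftN w)).image (fun u => graft u (rightN w))

/-- Extension of ⊣ to groves by union. -/
noncomputable def dashvG (G H : Finset (List ℕ)) : Finset (List ℕ) :=
  G.biUnion fun a => H.biUnion fun b => dashv a b

/-- Extension of ⊢ to groves by union. -/
noncomputable def vdashG (G H : Finset (List ℕ)) : Finset (List ℕ) :=
  G.biUnion fun a => H.biUnion fun b => vdash a b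

/-- The universal expression ω_u evaluated at a tree name v:
ω_{u_l ∨ u_r}(v) = ω_{u_l}(v) ⊢ v ⊣ ω_{u_r}(v), with ω_{(0)} = 0 and the unit
conventions (0) ⊢ x = x and x ⊣ (0) = x. -/
noncomputable def omega : PB → List ℕ → Finset (List ℕ)
  | .leaf, _ => ∅
  | .node .leaf .leaf, v => {v}
  | .node .leaf (.node r1 r2), v => dashvG {v} (omega (.node r1 r2) v)
  | .node (.node l1 l2) .leaf, v => vdashG (omega (.node l1 l2) v) {v}
  | .node (.node l1 l2) (.node r1 r2), v =>
      dashvG (vdashG (omega (.node l1 l2) v) {v}) (omega (.node r1 r2) v)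

/-- Dendriform multiplication u ⋉ v := ω_u(v). -/
noncomputable def ltimes (u v : List ℕ) : Finset (List ℕ) := omega (treeOf u) v

namespace Cancel

open PB

/-! ### Basic facts about names -/

lemma name_pos : ∀ (t : PB), ∀ x ∈ PB.name t, 1 ≤ x := by
  intro t
  induction t with
  | leaf => simp [PB.name]
  | node l r ihl ihr =>
    intro x hx
    simp only [PB.name, List.mem_append, List.mem_singleton, List.mem_map] at hx
    rcases hx with (hx | rfl) | ⟨y, hy, rfl⟩
    · exact ihl x hx
    · exact le_refl 1
    · omega

lemma treeName_pos {v : List ℕ} (h : TreeName v) : ∀ x ∈ v, 1 ≤ x := by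
  obtain ⟨t, rfl⟩ := h; exact name_pos t

lemma name_length (t : PB) : (PB.name t).length = t.nodes := by
  induction t with
  | leaf => rfl
  | node l r ihl ihr => simp [PB.name, PB.nodes, ihl, ihr]; omega

lemma name_treeOf {v : List ℕ} (h : TreeName v) : PB.name (treeOf v) = v := by
  have h' : ∃ t : PB, PB.name t = v := h
  rw [treeOf, dif_pos h']; exact h'.choose_spec

lemma treeName_leftN (v : List ℕ) : TreeName (leftN v) := ⟨_, rfl⟩
lemma treeName_rightN (v : List ℕ) : TreeName (rightN v) := ⟨_, rfl⟩

lemma graft_name (l r : PB) : graft (PB.name l) (PB.name r) = PB.name (.node l r) := rfl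

lemma treeName_graft {a b : List ℕ} (ha : TreeName a) (hb : TreeName b) :
    TreeName (graft a b) := by
  obtain ⟨s, rfl⟩ := ha; obtain ⟨t, rfl⟩ := hb; exact ⟨.node s t, (graft_name s t).symm⟩

lemma graft_ne_nil (a b : List ℕ) : graft a b ≠ [] := by simp [graft]

lemma treeOf_node {v : List ℕ} (h : TreeName v) (h0 : v ≠ []) :
    treeOf v = .node (treeOf v).left (treeOf v).right := by
  cases ht : treeOf v with
  | leaf => exact absurd ((name_treeOf h).symm.trans (by rw [ht]; rfl)) h0
  | node l r => rfl

lemma graft_lr {v : List ℕ} (h : TreeName v) (h0 : v ≠ []) :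
    graft (leftN v) (rightN v) = v := by
  rw [leftN, rightN, graft_name, ← treeOf_node h h0, name_treeOf h]

lemma decomp {v : List ℕ} (h : TreeName v) (h0 : v ≠ []) :
    v = leftN v ++ 1 :: ((rightN v).map (fun x => x + (leftN v).length + 1)) := by
  conv_lhs => rw [← graft_lr h h0]
  simp [graft]

lemma decomp_len {v : List ℕ} (h : TreeName v) (h0 : v ≠ []) :
    (leftN v).length + (rightN v).length + 1 = v.length := by
  conv_rhs => rw [decomp h h0]
  simp; omega

end Cancel
namespace Cancel

/-! ### vle basics -/

lemma vle_refl (v : List ℕ) : vle v v := List.forall₂_same.2 (fun _ _ => le_refl _)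

lemma vle_length {a b : List ℕ} (h : vle a b) : a.length = b.length :=
  List.Forall₂.length_eq h

lemma vle_trans : ∀ {a b c : List ℕ}, vle a b → vle b c → vle a c := by
  intro a b c h1 h2
  induction h1 generalizing c with
  | nil => cases h2; exact List.Forall₂.nil
  | cons h t ih => cases h2 with
    | cons h' t' => exact List.Forall₂.cons (le_trans h h') (ih t')

lemma vle_antisymm : ∀ {a b : List ℕ}, vle a b → vle b a → a = b := by
  intro a b h1 h2
  induction h1 with
  | nil => rfl
  | cons h t ih => cases h2 with
    | cons h' t' => rw [ih t', Nat.le_antisymm h h']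

lemma vle_append {a b c d : List ℕ} (h1 : vle a b) (h2 : vle c d) :
    vle (a ++ c) (b ++ d) := List.rel_append h1 h2

lemma vle_cons {x y : ℕ} {a b : List ℕ} (h : x ≤ y) (h2 : vle a b) :
    vle (x :: a) (y :: b) := List.Forall₂.cons h h2

lemma vle_map {a b : List ℕ} (f g : ℕ → ℕ) (hf : ∀ x y, x ≤ y → f x ≤ g y)
    (h : vle a b) : vle (a.map f) (b.map g) := by
  induction h with
  | nil => exact List.Forall₂.nil
  | cons h t ih => exact List.Forall₂.cons (hf _ _ h) ih

/-! ### listIcc -/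

lemma mem_listIcc_of {a x b : List ℕ} (h1 : vle a x) (h2 : vle x b) :
    x ∈ listIcc a b := by
  induction h1 generalizing b with
  | nil => cases h2; simp [listIcc]
  | @cons p q ps qs h t ih =>
    cases h2 with
    | @cons _ r _ rs h' t' =>
      rw [listIcc]
      simp only [Finset.mem_image, Finset.mem_product, Prod.exists]
      exact ⟨q, qs, ⟨Finset.mem_Icc.2 ⟨h, h'⟩, ih t'⟩, rfl⟩

lemma of_mem_listIcc : ∀ {a b x : List ℕ}, a.length = b.length →
    x ∈ listIcc a b → vle a x ∧ vle x b := by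
  intro a
  induction a with
  | nil =>
    intro b x hl hx
    cases b with
    | nil =>
      simp [listIcc] at hx
      subst hx; exact ⟨List.Forall₂.nil, List.Forall₂.nil⟩
    | cons b bs => simp at hl
  | cons a as ih =>
    intro b x hl hx
    cases b with
    | nil => simp at hl
    | cons b bs =>
      rw [listIcc] at hx
      simp only [Finset.mem_image, Finset.mem_product, Prod.exists] at hx
      obtain ⟨p, ps, ⟨hp, hps⟩, rfl⟩ := hx
      rw [Finset.mem_Icc] at hp
      have := ih (by simpa using hl) hps
      exact ⟨vle_cons hp.1 this.1, vle_cons hp.2 this.2⟩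

end Cancel
namespace Cancel

/-! ### over / under / dplus -/

lemma over_length (v w : List ℕ) : (overV v w).length = v.length + w.length := by
  simp [overV, rsh]

lemma under_length (v w : List ℕ) : (under v w).length = v.length + w.length := by
  simp [under]

lemma vle_over_under (v w : List ℕ) : vle (overV v w) (under v w) := by
  apply vle_append (vle_refl v)
  rw [rsh]
  apply vle_map
  · intro x y hxy
    by_cases hx : x = 1
    · simp [hx]; omega
    · simp [hx]; omega
  · exact vle_refl w

lemma mem_dplus_iff {v w x : List ℕ} :
    x ∈ dplus v w ↔ TreeName x ∧ vle (overV v w) x ∧ vle x (under v w) := by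
  classical
  rw [dplus, treeIcc, Finset.mem_filter]
  constructor
  · rintro ⟨h1, h2⟩
    exact ⟨h2, of_mem_listIcc (by rw [over_length, under_length]) h1⟩
  · rintro ⟨h1, h2, h3⟩
    exact ⟨mem_listIcc_of h2 h3, h1⟩

/-- Grafting a tree on the rightmost leaf realizes `under` on names. -/
def tunder : PB → PB → PB
  | .leaf, t => t
  | .node l r, t => .node l (tunder r t)

lemma under_name : ∀ (s t : PB), under (PB.name s) (PB.name t) = PB.name (tunder s t) := by
  intro s t
  induction s with
  | leaf => simp [tunder, under, PB.name]
  | node l r ihl ihr =>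
    rw [tunder, PB.name, PB.name, ← ihr]
    simp [under, PB.name, List.map_map, Function.comp]
    intro a ha; omega

lemma treeName_under {a b : List ℕ} (ha : TreeName a) (hb : TreeName b) :
    TreeName (under a b) := by
  obtain ⟨s, rfl⟩ := ha; obtain ⟨t, rfl⟩ := hb
  exact ⟨tunder s t, (under_name s t).symm⟩

lemma under_mem_dplus {v w : List ℕ} (hv : TreeName v) (hw : TreeName w) :
    under v w ∈ dplus v w :=
  mem_dplus_iff.2 ⟨treeName_under hv hw, vle_over_under v w, vle_refl _⟩

lemma dplus_out {v w x : List ℕ} (hx : x ∈ dplus v w) :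
    vle x (under v w) ∧ TreeName x :=
  ⟨(mem_dplus_iff.1 hx).2.2, (mem_dplus_iff.1 hx).1⟩

/-! ### graft / under interplay and monotonicity -/

lemma graft_append (c y z : List ℕ) :
    graft c (y ++ z) = graft c y ++ z.map (fun x => x + c.length + 1) := by
  simp [graft]

lemma under_under_map (a b : List ℕ) :
    under a b = a ++ b.map (fun x => x + a.length) := rfl

lemma graft_under {a : List ℕ} (b : List ℕ) (ha : TreeName a) (h0 : a ≠ []) :
    graft (leftN a) (under (rightN a) b) = under a b := by
  rw [under_under_map, graft_append, graft_lr ha h0, under_under_map, List.map_map]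
  have hlen := decomp_len ha h0
  congr 1
  apply List.map_congr_left
  intro x _
  simp only [Function.comp_apply]
  omega

lemma vle_graft_right {b b' : List ℕ} (c : List ℕ) (h : vle b b') :
    vle (graft c b) (graft c b') := by
  apply vle_append (vle_refl (c ++ [1]))
  exact vle_map _ _ (fun x y hxy => by omega) h

lemma vle_graft_left {a a' : List ℕ} (c : List ℕ) (h : vle a a') :
    vle (graft a c) (graft a' c) := by
  rw [graft, graft, List.append_assoc, List.append_assoc]
  apply vle_append h
  rw [vle_length h]
  exact vle_refl _

lemma vle_under {a a' b b' : List ℕ} (h1 : vle a a') (h2 : vle b b') :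
    vle (under a b) (under a' b') := by
  apply vle_append h1
  rw [vle_length h1]
  exact vle_map _ _ (fun x y hxy => by omega) h2

/-! ### dashv / vdash bounds -/

lemma dashv_out {a b x : List ℕ} (ha : TreeName a) (h0 : a ≠ []) (hx : x ∈ dashv a b) :
    vle x (under a b) ∧ TreeName x ∧ x ≠ [] := by
  rw [dashv, Finset.mem_image] at hx
  obtain ⟨y, hy, rfl⟩ := hx
  obtain ⟨hy1, hy2⟩ := dplus_out hy
  refine ⟨?_, treeName_graft (treeName_leftN a) hy2, graft_ne_nil _ _⟩
  rw [← graft_under b ha h0]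
  exact vle_graft_right _ hy1

lemma under_mem_dashv {a b : List ℕ} (ha : TreeName a) (h0 : a ≠ []) (hb : TreeName b) :
    under a b ∈ dashv a b := by
  rw [dashv, Finset.mem_image]
  exact ⟨under (rightN a) b, under_mem_dplus (treeName_rightN a) hb, graft_under b ha h0⟩

lemma vdash_out {a b x : List ℕ} (hx : x ∈ vdash a b) :
    vle x (graft (under a (leftN b)) (rightN b)) ∧ TreeName x ∧ x ≠ [] := by
  rw [vdash, Finset.mem_image] at hx
  obtain ⟨y, hy, rfl⟩ := hx
  obtain ⟨hy1, hy2⟩ := dplus_out hy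
  exact ⟨vle_graft_left _ hy1, treeName_graft hy2 (treeName_rightN b),
    graft_ne_nil _ _⟩

lemma vmax_mem_vdash {a : List ℕ} (b : List ℕ) (ha : TreeName a) :
    graft (under a (leftN b)) (rightN b) ∈ vdash a b := by
  rw [vdash, Finset.mem_image]
  exact ⟨under a (leftN b), under_mem_dplus ha (treeName_leftN b), rfl⟩

end Cancel
namespace Cancel

/-! ### The maximum element of a product grove -/

noncomputable def Mx : PB → List ℕ → List ℕ
  | .leaf, _ => []
  | .node .leaf r, v => under v (Mx r v)
  | .node (.node l1 l2) r, v =>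
      under (graft (under (Mx (.node l1 l2) v) (leftN v)) (rightN v)) (Mx r v)

lemma under_nil (v : List ℕ) : under v [] = v := by simp [under]

lemma mem_dashvG {G H : Finset (List ℕ)} {x : List ℕ} :
    x ∈ dashvG G H ↔ ∃ a ∈ G, ∃ b ∈ H, x ∈ dashv a b := by
  simp [dashvG, Finset.mem_biUnion]

lemma mem_vdashG {G H : Finset (List ℕ)} {x : List ℕ} :
    x ∈ vdashG G H ↔ ∃ a ∈ G, ∃ b ∈ H, x ∈ vdash a b := by
  simp [vdashG, Finset.mem_biUnion]

theorem omega_max : ∀ (t : PB) (v : List ℕ), t ≠ .leaf → TreeName v → v ≠ [] →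
    Mx t v ∈ omega t v ∧ ∀ x ∈ omega t v, vle x (Mx t v) ∧ TreeName x ∧ x ≠ [] := by
  intro t
  induction t with
  | leaf => intro v h; exact absurd rfl h
  | node l r ihl ihr =>
    intro v _ hv hv0
    cases l with
    | leaf =>
      cases r with
      | leaf =>
        constructor
        · simp [omega, Mx, under_nil]
        · intro x hx
          simp [omega] at hx
          subst hx
          exact ⟨by simp [Mx, under_nil]; exact vle_refl _, hv, hv0⟩
      | node r1 r2 =>
        obtain ⟨hmem, hub⟩ := ihr v (by simp) hv hv0
        have hTN : TreeName (Mx (PB.node r1 r2) v) := (hub _ hmem).2.1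
        constructor
        · show Mx _ v ∈ dashvG {v} (omega (.node r1 r2) v)
          rw [mem_dashvG]
          exact ⟨v, Finset.mem_singleton_self v, Mx (.node r1 r2) v, hmem,
            by rw [Mx]; exact under_mem_dashv hv hv0 hTN⟩
        · intro x hx
          rw [show omega (.node .leaf (.node r1 r2)) v =
            dashvG {v} (omega (.node r1 r2) v) from rfl, mem_dashvG] at hx
          obtain ⟨a, ha, b, hb, hx⟩ := hx
          rw [Finset.mem_singleton] at ha
          subst ha
          obtain ⟨h1, h2, h3⟩ := dashv_out hv hv0 hx
          refine ⟨?_, h2, h3⟩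
          rw [Mx]
          exact vle_trans h1 (vle_under (vle_refl _) (hub b hb).1)
    | node l1 l2 =>
      obtain ⟨hmeml, hubl⟩ := ihl v (by simp) hv hv0
      have hTNl : TreeName (Mx (PB.node l1 l2) v) := (hubl _ hmeml).2.1
      set A := graft (under (Mx (.node l1 l2) v) (leftN v)) (rightN v) with hA
      have hAmem : A ∈ vdash (Mx (.node l1 l2) v) v := vmax_mem_vdash v hTNl
      obtain ⟨hAle, hATN, hAne⟩ := vdash_out hAmem
      have hble : ∀ a ∈ omega (.node l1 l2) v, ∀ x ∈ vdash a v, vle x A := by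
        intro a ha x hx
        obtain ⟨h1, _, _⟩ := vdash_out hx
        exact vle_trans h1 (vle_graft_left _ (vle_under (hubl a ha).1 (vle_refl _)))
      cases r with
      | leaf =>
        constructor
        · show Mx _ v ∈ vdashG (omega (.node l1 l2) v) {v}
          rw [mem_vdashG]
          refine ⟨Mx (.node l1 l2) v, hmeml, v, Finset.mem_singleton_self v, ?_⟩
          rw [Mx, Mx, under_nil, ← hA]
          exact hAmem
        · intro x hx
          rw [show omega (.node (.node l1 l2) .leaf) v =
            vdashG (omega (.node l1 l2) v) {v} from rfl, mem_vdashG] at hx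
          obtain ⟨a, ha, b, hb, hx⟩ := hx
          rw [Finset.mem_singleton] at hb
          subst hb
          obtain ⟨_, h2, h3⟩ := vdash_out hx
          refine ⟨?_, h2, h3⟩
          rw [Mx, Mx, under_nil, ← hA]
          exact hble a ha x hx
      | node r1 r2 =>
        obtain ⟨hmemr, hubr⟩ := ihr v (by simp) hv hv0
        have hTNr : TreeName (Mx (PB.node r1 r2) v) := (hubr _ hmemr).2.1
        constructor
        · show Mx _ v ∈ dashvG (vdashG (omega (.node l1 l2) v) {v}) (omega (.node r1 r2) v)
          rw [mem_dashvG]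
          refine ⟨A, ?_, Mx (.node r1 r2) v, hmemr, ?_⟩
          · rw [mem_vdashG]
            exact ⟨Mx (.node l1 l2) v, hmeml, v, Finset.mem_singleton_self v, hAmem⟩
          · rw [Mx, ← hA]
            exact under_mem_dashv hATN hAne hTNr
        · intro x hx
          rw [show omega (.node (.node l1 l2) (.node r1 r2)) v =
            dashvG (vdashG (omega (.node l1 l2) v) {v}) (omega (.node r1 r2) v) from rfl,
            mem_dashvG] at hx
          obtain ⟨a, ha, b, hb, hx⟩ := hx
          rw [mem_vdashG] at ha
          obtain ⟨z, hz, c, hc, ha⟩ := ha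
          rw [Finset.mem_singleton] at hc
          subst hc
          obtain ⟨ha1, ha2, ha3⟩ := vdash_out ha
          obtain ⟨h1, h2, h3⟩ := dashv_out ha2 ha3 hx
          refine ⟨?_, h2, h3⟩
          rw [Mx, ← hA]
          exact vle_trans h1 (vle_under (hble z hz a ha) (hubr b hb).1)

end Cancel
namespace Cancel

lemma graft_length (a b : List ℕ) : (graft a b).length = a.length + b.length + 1 := by
  simp [graft]; omega

lemma treeName_Mx {t : PB} {v : List ℕ} (ht : t ≠ .leaf) (hv : TreeName v) (hv0 : v ≠ []) :
    TreeName (Mx t v) :=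
  ((omega_max t v ht hv hv0).2 _ (omega_max t v ht hv hv0).1).2.1

lemma pos_Mx (t : PB) {v : List ℕ} (hv : TreeName v) (hv0 : v ≠ []) :
    ∀ x ∈ Mx t v, 1 ≤ x := by
  cases t with
  | leaf => simp [Mx]
  | node l r => exact treeName_pos (treeName_Mx (by simp) hv hv0)

lemma len_Mx (t : PB) {v : List ℕ} (hv : TreeName v) (hv0 : v ≠ []) :
    (Mx t v).length = t.nodes * v.length := by
  induction t with
  | leaf => simp [Mx, PB.nodes]
  | node l r ihl ihr =>
    have hd := decomp_len hv hv0
    cases l with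
    | leaf =>
      simp [Mx, under_length, ihr, PB.nodes, Nat.add_mul, Nat.one_mul]
      omega
    | node l1 l2 =>
      simp [Mx, under_length, graft_length, ihl, ihr, PB.nodes, Nat.add_mul, Nat.one_mul]
      omega

lemma prefix_Mx (t : PB) (v : List ℕ) (ht : t ≠ .leaf) : v <+: Mx t v := by
  induction t with
  | leaf => exact absurd rfl ht
  | node l r ihl ihr =>
    cases l with
    | leaf => rw [Mx, under_under_map]; exact List.prefix_append v _
    | node l1 l2 =>
      rw [Mx, under_under_map]
      refine (ihl (by simp)).trans (List.IsPrefix.trans ?_ (List.prefix_append _ _))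
      rw [graft, under_under_map, List.append_assoc, List.append_assoc]
      exact List.prefix_append _ _

lemma Mx_node_eq (l r : PB) {v : List ℕ} (hv : TreeName v) (hv0 : v ≠ []) :
    Mx (.node l r) v =
      (Mx l v ++ (leftN v).map (fun x => x + (Mx l v).length)) ++
      1 :: ((rightN v).map (fun x => x + (Mx l v).length + (leftN v).length + 1) ++
        (Mx r v).map (fun x => x + (Mx l v).length + v.length)) := by
  have hd := decomp_len hv hv0
  cases l with
  | leaf =>
    rw [show Mx (PB.node PB.leaf r) v = under v (Mx r v) from rfl, under_under_map]
    have h0 : Mx PB.leaf v = [] := rfl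
    rw [h0]
    simp only [List.length_nil, List.nil_append, Nat.add_zero, List.map_id']
    nth_rewrite 1 [decomp hv hv0]
    simp [List.append_assoc]
  | node l1 l2 =>
    rw [show Mx (PB.node (PB.node l1 l2) r) v =
      under (graft (under (Mx (PB.node l1 l2) v) (leftN v)) (rightN v)) (Mx r v) from rfl,
      under_under_map, under_under_map, graft]
    simp only [List.append_assoc, List.length_append, List.length_map, List.length_cons,
      List.singleton_append, List.cons_append]
    simp only [List.nil_append, List.length_nil]
    congr 1
    congr 1
    congr 1
    congr 1
    · exact List.map_congr_left fun x _ => by omega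
    · exact List.map_congr_left fun x _ => by omega

lemma lastOne_unique : ∀ (A : List ℕ) {B A' B' : List ℕ},
    A ++ 1 :: B = A' ++ 1 :: B' → 1 ∉ B → 1 ∉ B' → A = A' ∧ B = B' := by
  intro A
  induction A with
  | nil =>
    intro B A' B' h hB hB'
    cases A' with
    | nil => simp at h; exact ⟨rfl, h⟩
    | cons a as =>
      simp at h
      obtain ⟨rfl, h2⟩ := h
      exact absurd (h2 ▸ List.mem_append_right as (List.mem_cons_self (a := 1) (l := B'))) hB
  | cons a as ih =>
    intro B A' B' h hB hB'
    cases A' with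
    | nil =>
      simp at h
      obtain ⟨rfl, h2⟩ := h
      exact absurd (h2.symm ▸ List.mem_append_right as (List.mem_cons_self (a := 1) (l := B))) hB'
    | cons a' as' =>
      simp at h
      obtain ⟨rfl, h2⟩ := h
      obtain ⟨h3, h4⟩ := ih h2 hB hB'
      exact ⟨by rw [h3], h4⟩

end Cancel
namespace Cancel

lemma Mx_inj : ∀ (t t' : PB) {v : List ℕ}, TreeName v → v ≠ [] → t.nodes = t'.nodes →
    Mx t v = Mx t' v → t = t' := by
  intro t
  induction t with
  | leaf =>
    intro t' v _ _ hn _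
    cases t' with
    | leaf => rfl
    | node l r => simp [PB.nodes] at hn
  | node l r ihl ihr =>
    intro t' v hv hv0 hn heq
    cases t' with
    | leaf => simp [PB.nodes] at hn
    | node l' r' =>
      rw [Mx_node_eq l r hv hv0, Mx_node_eq l' r' hv hv0] at heq
      have hvpos : 1 ≤ v.length := by
        cases v with
        | nil => exact absurd rfl hv0
        | cons a as => simp
      have notB : ∀ (a b : PB),
          1 ∉ ((rightN v).map (fun x => x + (Mx a v).length + (leftN v).length + 1) ++
            (Mx b v).map (fun x => x + (Mx a v).length + v.length)) := by
        intro a b h1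
        rw [List.mem_append] at h1
        rcases h1 with h1 | h1 <;> simp only [List.mem_map] at h1 <;> obtain ⟨x, hx, hx1⟩ := h1
        · have := treeName_pos (treeName_rightN v) x hx
          omega
        · have := pos_Mx b hv hv0 x hx
          omega
      obtain ⟨hA, hB⟩ := lastOne_unique _ heq (notB l r) (notB l' r')
      have hlenA := congrArg List.length hA
      simp only [List.length_append, List.length_map] at hlenA
      have hm : (Mx l v).length = (Mx l' v).length := by omega
      have hnl : l.nodes = l'.nodes := by
        have e1 := len_Mx l hv hv0
        have e2 := len_Mx l' hv hv0
        exact Nat.eq_of_mul_eq_mul_right hvpos (by omega)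
      have hMl : Mx l v = Mx l' v := (List.append_inj hA hm).1
      have hl := ihl l' hv hv0 hnl hMl
      subst hl
      have hMr : (Mx r v).map (fun x => x + (Mx l v).length + v.length) =
          (Mx r' v).map (fun x => x + (Mx l v).length + v.length) :=
        (List.append_inj hB (by simp)).2
      have hMr' : Mx r v = Mx r' v := by
        have hinj : Function.Injective (fun x : ℕ => x + (Mx l v).length + v.length) :=
          fun a b h => by simpa using h
        exact List.map_injective_iff.2 hinj hMr
      have hnr : r.nodes = r'.nodes := by
        simp [PB.nodes] at hn; omega
      rw [ihr r' hv hv0 hnr hMr']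

lemma nodes_treeOf {u : List ℕ} (hu : TreeName u) : (treeOf u).nodes = u.length := by
  rw [← name_length, name_treeOf hu]

lemma treeOf_ne_leaf {u : List ℕ} (hu : TreeName u) (hu0 : u ≠ []) : treeOf u ≠ .leaf := by
  intro h
  exact hu0 (by rw [← name_treeOf hu, h]; rfl)

end Cancel

/-- Left and right cancellation for the dendriform multiplication ⋉. -/
theorem stmt18 (u v w : List ℕ) (hu : TreeName u) (hv : TreeName v) (hw : TreeName w)
    (hv0 : v ≠ []) (hlen : u.length = w.length) :
    (ltimes v u = ltimes v w → u = w) ∧ (ltimes u v = ltimes w v → u = w) := by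
  open Cancel in
  by_cases hu0 : u = []
  · have hw0 : w = [] := by
      subst hu0
      exact (List.length_eq_zero_iff.1 hlen.symm)
    rw [hu0, hw0]
    simp
  · have hw0 : w ≠ [] := by
      intro h
      rw [h, List.length_nil, List.length_eq_zero_iff] at hlen
      exact hu0 hlen
    constructor
    · intro h
      rw [ltimes, ltimes] at h
      have htv : treeOf v ≠ .leaf := Cancel.treeOf_ne_leaf hv hv0
      obtain ⟨hm1, hb1⟩ := Cancel.omega_max (treeOf v) u htv hu hu0
      obtain ⟨hm2, hb2⟩ := Cancel.omega_max (treeOf v) w htv hw hw0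
      have e1 : vle (Cancel.Mx (treeOf v) u) (Cancel.Mx (treeOf v) w) :=
        (hb2 _ (h ▸ hm1)).1
      have e2 : vle (Cancel.Mx (treeOf v) w) (Cancel.Mx (treeOf v) u) :=
        (hb1 _ (h.symm ▸ hm2)).1
      have heq : Cancel.Mx (treeOf v) u = Cancel.Mx (treeOf v) w :=
        Cancel.vle_antisymm e1 e2
      have p1 : u <+: Cancel.Mx (treeOf v) w := heq ▸ Cancel.prefix_Mx _ _ htv
      have p2 : w <+: Cancel.Mx (treeOf v) w := Cancel.prefix_Mx _ _ htv
      exact (List.prefix_of_prefix_length_le p1 p2 (le_of_eq hlen)).eq_of_length hlen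
    · intro h
      rw [ltimes, ltimes] at h
      have htu : treeOf u ≠ .leaf := Cancel.treeOf_ne_leaf hu hu0
      have htw : treeOf w ≠ .leaf := Cancel.treeOf_ne_leaf hw hw0
      obtain ⟨hm1, hb1⟩ := Cancel.omega_max (treeOf u) v htu hv hv0
      obtain ⟨hm2, hb2⟩ := Cancel.omega_max (treeOf w) v htw hv hv0
      have e1 : vle (Cancel.Mx (treeOf u) v) (Cancel.Mx (treeOf w) v) :=
        (hb2 _ (h ▸ hm1)).1
      have e2 : vle (Cancel.Mx (treeOf w) v) (Cancel.Mx (treeOf u) v) :=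
        (hb1 _ (h.symm ▸ hm2)).1
      have heq : Cancel.Mx (treeOf u) v = Cancel.Mx (treeOf w) v :=
        Cancel.vle_antisymm e1 e2
      have hn : (treeOf u).nodes = (treeOf w).nodes := by
        rw [Cancel.nodes_treeOf hu, Cancel.nodes_treeOf hw, hlen]
      have := Cancel.Mx_inj (treeOf u) (treeOf w) hv hv0 hn heq
      rw [← Cancel.name_treeOf hu, ← Cancel.name_treeOf hw, this]
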